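/- Let n ≥ 2 and let ε ∈ Σ satisfy: σ^j(ε) ≺ ε for every j ≥ 1 with j ≢ 0 (mod n), and σ^j(ε) = ε for every j ≥ 0 with j ≡ 0 (mod n). Then there exists β ∈ (1,2) such that the quasi-greedy expansion d'(β) is defined and d'(β) = ε. -/

import Mathlib

/-- A 0-1 sequence: all values are at most 1. Index `k` corresponds to `ε_{k+1}` in the paper. -/
def isSeq (ε : ℕ → ℕ) : Prop := ∀ k, ε k ≤ 1

/-- The shift map σ. -/
def shift (ε : ℕ → ℕ) : ℕ → ℕ := fun n => ε (n + 1)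

/-- The mirror image ε̄, (ε̄)_n = 1 - ε_n. -/
def mirror (ε : ℕ → ℕ) : ℕ → ℕ := fun n => 1 - ε n

/-- Strict lexicographic order on sequences. -/
def lexLt (a b : ℕ → ℕ) : Prop := ∃ k, (∀ j, j < k → a j = b j) ∧ a k < b k

/-- Non-strict lexicographic order. -/
def lexLe (a b : ℕ → ℕ) : Prop := lexLt a b ∨ a = b

/-- ε is periodic with smallest period n ≥ 1. -/
def periodicSmallest (n : ℕ) (ε : ℕ → ℕ) : Prop :=
  1 ≤ n ∧ shift^[n] ε = ε ∧ ∀ j, 1 ≤ j → j < n → shift^[j] ε ≠ ε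

/-- The greedy expansion d(β) of 1 in base β (0-indexed: `greedy β n` is ε_{n+1}). -/
noncomputable def greedy (β : ℝ) : ℕ → ℕ :=
  fun n => (⌊β * ((fun x => Int.fract (β * x))^[n] 1)⌋).toNat

/-- d(β) is finite with last 1 at (0-based) position N. -/
def greedyFinite (β : ℝ) (N : ℕ) : Prop :=
  greedy β N = 1 ∧ ∀ k, N < k → greedy β k = 0

/-- The quasi-greedy expansion d'(β) = (ε_1 … ε_{N} 0)^∞ (block of length N+1),
where N is the 0-based position of the last 1 of d(β). -/
noncomputable def quasiGreedy (β : ℝ) (N : ℕ) : ℕ → ℕ :=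
  fun k => if k % (N + 1) = N then 0 else greedy β (k % (N + 1))

/- ############ auxiliary lemmas ############ -/

lemma shift_iter (ε : ℕ → ℕ) : ∀ (j k : ℕ), shift^[j] ε k = ε (k + j) := by
  intro j
  induction j generalizing ε with
  | zero => intro k; simp
  | succ j ih =>
    intro k
    rw [Function.iterate_succ_apply, ih (shift ε) k]
    rfl

lemma lex_absurd {a b : ℕ → ℕ} (h : lexLt a b) (K : ℕ)
    (heq : ∀ j, j < K → a j = b j) (hgt : b K < a K) : False := by
  obtain ⟨K', h', hlt⟩ := h
  rcases lt_trichotomy K K' with hc | hc | hc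
  · have := h' K hc; omega
  · subst hc; omega
  · have := heq K' hc; omega

noncomputable def rr (c : ℕ → ℕ) (y : ℝ) (n m : ℕ) : ℝ :=
  ∑ j ∈ Finset.range (n - m), (c (m + j) : ℝ) * y ^ (j + 1)

lemma rr_nonneg (c : ℕ → ℕ) (y : ℝ) (n m : ℕ) (hy : 0 ≤ y) : 0 ≤ rr c y n m :=
  Finset.sum_nonneg fun j _ => mul_nonneg (Nat.cast_nonneg _) (pow_nonneg hy _)

lemma rr_rec (c : ℕ → ℕ) (y β : ℝ) (n : ℕ) (hβy : β * y = 1)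
    (hcz : ∀ k, n ≤ k → c k = 0) (m : ℕ) :
    β * rr c y n m = (c m : ℝ) + rr c y n (m + 1) := by
  rcases lt_or_ge m n with hm | hm
  · have t1 : ∀ j : ℕ, β * ((c (m + j) : ℝ) * y ^ (j + 1)) = (c (m + j) : ℝ) * y ^ j := by
      intro j
      rw [pow_succ]
      calc β * ((c (m + j) : ℝ) * (y ^ j * y)) = (c (m + j) : ℝ) * y ^ j * (β * y) := by ring
      _ = (c (m + j) : ℝ) * y ^ j := by rw [hβy, mul_one]
    have hnm : n - m = (n - (m + 1)) + 1 := by omega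
    simp only [rr]
    rw [Finset.mul_sum, Finset.sum_congr rfl (fun j _ => t1 j), hnm,
      Finset.sum_range_succ']
    simp only [add_zero, pow_zero, mul_one]
    rw [add_comm]
    congr 1
    apply Finset.sum_congr rfl
    intro j _
    have e : m + 1 + j = m + (j + 1) := by omega
    rw [e]
  · have h0 : n - m = 0 := by omega
    have h1 : n - (m + 1) = 0 := by omega
    simp only [rr]
    rw [h0, h1]
    simp [hcz m hm]

lemma rr_split (c : ℕ → ℕ) (y : ℝ) (n m K : ℕ) (hK : K < n - m) :
    rr c y n m = (∑ j ∈ Finset.range K, (c (m + j) : ℝ) * y ^ (j + 1))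
      + (c (m + K) : ℝ) * y ^ (K + 1) + y ^ (K + 1) * rr c y n (m + K + 1) := by
  have hsum : n - m = (K + 1) + (n - (m + K + 1)) := by omega
  simp only [rr]
  rw [hsum, Finset.sum_range_add, Finset.sum_range_succ]
  congr 1
  rw [Finset.mul_sum]
  apply Finset.sum_congr rfl
  intro j _
  have e1 : m + (K + 1 + j) = m + K + 1 + j := by omega
  have e2 : (K + 1 + j) + 1 = (K + 1) + (j + 1) := by omega
  rw [e1, e2, pow_add]
  ring

lemma rr_lt_one (c : ℕ → ℕ) (y : ℝ) (n : ℕ) (hy : 0 < y)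
    (hr0 : rr c y n 0 = 1)
    (hclex : ∀ m, 1 ≤ m → ∃ K, (∀ j, j < K → c (m + j) = c j) ∧ c (m + K) = 0 ∧ c K = 1)
    (hcz : ∀ k, n ≤ k → c k = 0) :
    ∀ m, 1 ≤ m → rr c y n m < 1 := by
  have main : ∀ t m, 1 ≤ m → n - m ≤ t → rr c y n m < 1 := by
    intro t
    induction t with
    | zero =>
      intro m hm ht
      have h0 : n - m = 0 := by omega
      simp only [rr]
      rw [h0]
      simp
    | succ t ih =>
      intro m hm ht
      rcases le_or_gt n m with hnm | hnm
      · have : n - m = 0 := by omega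
        simp only [rr]
        rw [this]; simp
      · obtain ⟨K, hKe, hK0, hK1⟩ := hclex m hm
        have hKn : K < n := by
          by_contra hc
          have := hcz K (by omega)
          omega
        rcases lt_or_ge K (n - m) with hKlt | hKge
        · have s0 := rr_split c y n 0 K (by omega)
          have sm := rr_split c y n m K hKlt
          simp only [zero_add] at s0
          have hsame : (∑ j ∈ Finset.range K, (c (m + j) : ℝ) * y ^ (j + 1))
              = ∑ j ∈ Finset.range K, (c j : ℝ) * y ^ (j + 1) := by
            apply Finset.sum_congr rfl
            intro j hj
            rw [hKe j (Finset.mem_range.mp hj)]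
          have hrec : rr c y n (m + K + 1) < 1 :=
            ih (m + K + 1) (by omega) (by omega)
          have hpos : (0:ℝ) < y ^ (K + 1) := pow_pos hy _
          have hnn : 0 ≤ rr c y n (K + 1) := rr_nonneg c y n (K+1) (le_of_lt hy)
          rw [hr0] at s0
          rw [hK1] at s0
          rw [hK0] at sm
          rw [hsame] at sm
          push_cast at s0 sm
          nlinarith [mul_pos hpos (by linarith : (0:ℝ) < 1 + rr c y n (K+1) - rr c y n (m+K+1))]
        · have hrm : rr c y n m = ∑ j ∈ Finset.range (n - m), (c j : ℝ) * y ^ (j + 1) := by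
            simp only [rr]
            apply Finset.sum_congr rfl
            intro j hj
            rw [hKe j (by have := Finset.mem_range.mp hj; omega)]
          have s0 := rr_split c y n 0 K (by omega)
          simp only [zero_add] at s0
          rw [hr0, hK1] at s0
          have hmono : (∑ j ∈ Finset.range (n - m), (c j : ℝ) * y ^ (j + 1))
              ≤ ∑ j ∈ Finset.range K, (c j : ℝ) * y ^ (j + 1) := by
            apply Finset.sum_le_sum_of_subset_of_nonneg
            · exact Finset.range_subset_range.mpr hKge
            · intro i _ _
              exact mul_nonneg (Nat.cast_nonneg _) (pow_nonneg (le_of_lt hy) _)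
          have hpos : (0:ℝ) < y ^ (K + 1) := pow_pos hy _
          have hnn : 0 ≤ rr c y n (K + 1) := rr_nonneg c y n (K+1) (le_of_lt hy)
          push_cast at s0
          nlinarith
  intro m hm
  exact main (n - m) m hm le_rfl

/-- If σ^j(ε) ≺ ε for j ≢ 0 (mod n), j ≥ 1, and σ^j(ε) = ε for j ≡ 0 (mod n),
then ε = d'(β) for some β ∈ (1,2). -/
theorem stmt3 (n : ℕ) (hn : 2 ≤ n) (ε : ℕ → ℕ) (hseq : isSeq ε)
    (h1 : ∀ j, 1 ≤ j → j % n ≠ 0 → lexLt (shift^[j] ε) ε)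
    (h2 : ∀ j, j % n = 0 → shift^[j] ε = ε) :
    ∃ β : ℝ, (1 < β ∧ β < 2) ∧ ∃ N, greedyFinite β N ∧ quasiGreedy β N = ε := by
  have hn1 : 1 ≤ n - 1 := by omega
  -- periodicity facts
  have hper : ∀ k, ε (k + n) = ε k := by
    intro k
    have h := congrFun (h2 n (Nat.mod_self n)) k
    rwa [shift_iter] at h
  have emod : ∀ k, ε k = ε (k % n) := by
    intro k
    induction k using Nat.strong_induction_on with
    | _ k ih =>
      rcases lt_or_ge k n with h | h
      · rw [Nat.mod_eq_of_lt h]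
      · have h10 := hper (k - n)
        have e : k - n + n = k := by omega
        rw [e] at h10
        calc ε k = ε (k - n) := h10
        _ = ε ((k - n) % n) := ih (k - n) (by omega)
        _ = ε (k % n) := by rw [Nat.mod_eq_sub_mod h]
  -- witnesses from h1
  have hw : ∀ m, 1 ≤ m → m < n →
      ∃ K, (∀ j, j < K → ε (j + m) = ε j) ∧ ε (K + m) = 0 ∧ ε K = 1 := by
    intro m hm hmn
    obtain ⟨K, hKe, hKlt⟩ := h1 m hm (by rw [Nat.mod_eq_of_lt hmn]; omega)
    rw [shift_iter] at hKlt
    have hs := hseq K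
    exact ⟨K, fun j hj => by have := hKe j hj; rwa [shift_iter] at this,
      by omega, by omega⟩
  have hfull : ∀ m, (∀ j, j < n → ε (j + m) = ε j) → ∀ j, ε (j + m) = ε j := by
    intro m hp j
    induction j using Nat.strong_induction_on with
    | _ j ih =>
      rcases lt_or_ge j n with h | h
      · exact hp j h
      · have e1 : j + m = (j - n) + m + n := by omega
        rw [e1, hper, ih (j - n) (by omega)]
        have h10 := hper (j - n)
        have e2 : j - n + n = j := by omega
        rw [e2] at h10
        exact h10.symm
  -- ε 0 = 1
  have e0 : ε 0 = 1 := by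
    obtain ⟨K, hKe, hK0, hK1⟩ := hw 1 le_rfl (by omega)
    have chain : ∀ i, i ≤ K → ε (K - i) = 1 := by
      intro i
      induction i with
      | zero => intro _; simpa using hK1
      | succ i ih =>
        intro hi
        have h3 := hKe (K - (i+1)) (by omega)
        have e : K - (i+1) + 1 = K - i := by omega
        rw [e] at h3
        rw [← h3]
        exact ih (by omega)
    have := chain K le_rfl
    simpa using this
  -- ε (n-1) = 0
  have en1 : ε (n - 1) = 0 := by
    obtain ⟨K, hKe, hK0, hK1⟩ := hw (n-1) hn1 (by omega)
    rcases Nat.eq_zero_or_pos K with h | hKpos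
    · subst h; simpa using hK0
    · exfalso
      apply lex_absurd (h1 1 le_rfl (by rw [Nat.mod_eq_of_lt (by omega)]; omega)) (K - 1)
      · intro j hj
        rw [shift_iter]
        have h3 := hKe (j + 1) (by omega)
        have e : j + 1 + (n - 1) = j + n := by omega
        rw [e, hper] at h3
        exact h3.symm
      · rw [shift_iter]
        have e : K - 1 + 1 = K := by omega
        rw [e]
        have h4 : ε (K - 1) = 0 := by
          have h5 := hper (K - 1)
          have e2 : K - 1 + n = K + (n - 1) := by omega
          rw [e2] at h5
          omega
        omega
  -- the key combinatorial lemma: the first difference occurs within the period block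
  have key : ∀ m, 1 ≤ m → m < n →
      ∃ K, K + m ≤ n - 1 ∧ (∀ j, j < K → ε (j + m) = ε j) ∧ ε (K + m) = 0 ∧ ε K = 1 := by
    intro m hm1 hmn
    obtain ⟨K, hKe, hK0, hK1⟩ := hw m hm1 hmn
    refine ⟨K, ?_, hKe, hK0, hK1⟩
    by_contra hbig
    push_neg at hbig
    have hKn : K < n := by
      by_contra hc
      push_neg at hc
      have := hfull m (fun j hj => hKe j (by omega)) K
      omega
    have f1 : ε ((K + m - n) + (n - m)) = 1 := by
      have e : K + m - n + (n - m) = K := by omega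
      rw [e]; exact hK1
    have f2 : ε (K + m - n) = 0 := by
      have h5 := hper (K + m - n)
      have e : K + m - n + n = K + m := by omega
      rw [e] at h5
      omega
    have f3 : ∀ j, j < K + m - n → ε (j + (n - m)) = ε j := by
      intro j hj
      have h4 := hKe (j + (n - m)) (by omega)
      have e : j + (n - m) + m = j + n := by omega
      rw [e, hper] at h4
      exact h4.symm
    exact lex_absurd (h1 (n - m) (by omega) (by rw [Nat.mod_eq_of_lt (by omega)]; omega))
      (K + m - n) (fun j hj => by rw [shift_iter]; exact f3 j hj)
      (by rw [shift_iter]; omega)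
  -- the finite digit string c
  set c : ℕ → ℕ := fun k => if k < n - 1 then ε k else if k = n - 1 then 1 else 0 with hcdef
  have ceq : ∀ k, k < n - 1 → c k = ε k := by
    intro k hk
    simp only [hcdef]
    rw [if_pos hk]
  have cn1 : c (n - 1) = 1 := by
    simp only [hcdef]
    rw [if_neg (by omega)]
    simp
  have czero : ∀ k, n ≤ k → c k = 0 := by
    intro k hk
    simp only [hcdef]
    rw [if_neg (by omega), if_neg (by omega)]
  have c0 : c 0 = 1 := by rw [ceq 0 (by omega), e0]
  have c_le1 : ∀ k, c k ≤ 1 := by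
    intro k
    simp only [hcdef]
    split_ifs
    · exact hseq k
    · exact le_rfl
    · omega
  -- lexicographic property of c
  have clex : ∀ m, 1 ≤ m → ∃ K, (∀ j, j < K → c (m + j) = c j) ∧ c (m + K) = 0 ∧ c K = 1 := by
    intro m hm
    rcases le_or_gt n m with hge | hlt
    · refine ⟨0, fun j hj => absurd hj (by omega), ?_, c0⟩
      rw [Nat.add_zero]
      exact czero m hge
    · obtain ⟨K, hKle, hKe, hK0, hK1⟩ := key m hm hlt
      rcases lt_or_eq_of_le hKle with hlt2 | heq2
      · refine ⟨K, ?_, ?_, ?_⟩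
        · intro j hj
          have e : m + j = j + m := by omega
          rw [e, ceq _ (by omega), ceq _ (by omega), hKe j hj]
        · have e : m + K = K + m := by omega
          rw [e, ceq _ (by omega), hK0]
        · rw [ceq _ (by omega), hK1]
      · have hcK : c K = 1 := by rw [ceq _ (by omega), hK1]
        have hP : ∃ j, K < j ∧ c j = 1 := ⟨n - 1, by omega, cn1⟩
        obtain ⟨hKK', hcK'⟩ := Nat.find_spec hP
        have hmin : ∀ j, j < Nat.find hP → ¬(K < j ∧ c j = 1) :=
          fun j hj => Nat.find_min hP hj
        have hK'le : Nat.find hP ≤ n - 1 := Nat.find_min' hP ⟨by omega, cn1⟩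
        refine ⟨Nat.find hP, ?_, ?_, hcK'⟩
        · intro j hj
          rcases lt_trichotomy j K with hc | hc | hc
          · have e : m + j = j + m := by omega
            rw [e, ceq _ (by omega), ceq _ (by omega), hKe j hc]
          · subst hc
            have e : m + j = n - 1 := by omega
            rw [e, cn1, hcK]
          · have hz : c j = 0 := by
              have h6 := hmin j hj
              have h7 := c_le1 j
              omega
            have hz2 : c (m + j) = 0 := czero _ (by omega)
            rw [hz, hz2]
        · exact czero _ (by omega)
  -- analytic part: find y with sum = 1 by IVT
  have hcont : Continuous (fun y : ℝ => ∑ k ∈ Finset.range n, (c k : ℝ) * y ^ (k+1)) :=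
    continuous_finset_sum _ (fun k _ => continuous_const.mul (continuous_pow (k+1)))
  have hgeom : ∀ N : ℕ, (∑ k ∈ Finset.range N, ((1:ℝ)/2) ^ (k+1)) = 1 - (1/2)^N := by
    intro N
    induction N with
    | zero => simp
    | succ N ih =>
      rw [Finset.sum_range_succ, ih, pow_succ]
      ring
  have hhalf : (∑ k ∈ Finset.range n, (c k : ℝ) * (1/2 : ℝ) ^ (k+1)) < 1 := by
    have hle : (∑ k ∈ Finset.range n, (c k : ℝ) * (1/2 : ℝ) ^ (k+1))
        ≤ ∑ k ∈ Finset.range n, ((1:ℝ)/2) ^ (k+1) := by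
      apply Finset.sum_le_sum
      intro k _
      have h5 : (c k : ℝ) ≤ 1 := by exact_mod_cast c_le1 k
      have h6 : (0:ℝ) ≤ (1/2 : ℝ)^(k+1) := by positivity
      nlinarith
    have hp : (0:ℝ) < (1/2 : ℝ)^n := by positivity
    rw [hgeom n] at hle
    linarith
  have hone : (1:ℝ) < ∑ k ∈ Finset.range n, (c k : ℝ) * (1:ℝ) ^ (k+1) := by
    have hsub : ({0, n-1} : Finset ℕ) ⊆ Finset.range n := by
      intro x hx
      simp only [Finset.mem_insert, Finset.mem_singleton] at hx
      rcases hx with h | h <;> (rw [Finset.mem_range]; omega)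
    have hmono := Finset.sum_le_sum_of_subset_of_nonneg
      (f := fun k => (c k : ℝ) * (1:ℝ)^(k+1)) hsub (fun i _ _ => by positivity)
    have hpair : (∑ k ∈ ({0, n-1} : Finset ℕ), (c k : ℝ) * (1:ℝ)^(k+1)) = 2 := by
      rw [Finset.sum_pair (by omega : (0:ℕ) ≠ n-1), c0, cn1]
      norm_num
    rw [hpair] at hmono
    linarith
  obtain ⟨y, hyIoo, hfy⟩ := intermediate_value_Ioo (by norm_num : (1/2:ℝ) ≤ 1)
    hcont.continuousOn (Set.mem_Ioo.mpr ⟨hhalf, hone⟩)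
  obtain ⟨hy2, hy1⟩ := hyIoo
  have hy0 : (0:ℝ) < y := by linarith
  simp only at hfy
  set β : ℝ := y⁻¹ with hβdef
  have hβy : β * y = 1 := inv_mul_cancel₀ (ne_of_gt hy0)
  have hβ1 : 1 < β := (one_lt_inv₀ hy0).mpr hy1
  have hβ2 : β < 2 := by
    have h7 : (2:ℝ)⁻¹ < y := by linarith
    have h8 : y⁻¹ < ((2:ℝ)⁻¹)⁻¹ := by gcongr
    rw [inv_inv] at h8
    exact h8
  have hr0 : rr c y n 0 = 1 := by
    simp only [rr, Nat.sub_zero, Nat.zero_add]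
    exact hfy
  have rlt : ∀ m, 1 ≤ m → rr c y n m < 1 := rr_lt_one c y n hy0 hr0 clex czero
  have rnn : ∀ m, 0 ≤ rr c y n m := fun m => rr_nonneg c y n m (le_of_lt hy0)
  have rrec : ∀ m, β * rr c y n m = (c m : ℝ) + rr c y n (m+1) :=
    rr_rec c y β n hβy czero
  have Titer : ∀ m, (fun x => Int.fract (β * x))^[m] 1 = rr c y n m := by
    intro m
    induction m with
    | zero => simpa using hr0.symm
    | succ m ih =>
      rw [Function.iterate_succ_apply', ih]
      show Int.fract (β * rr c y n m) = rr c y n (m+1)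
      rw [rrec m]
      have hcast : ((c m : ℝ)) = ((c m : ℤ) : ℝ) := by push_cast; ring
      rw [hcast, Int.fract_intCast_add]
      exact Int.fract_eq_self.mpr ⟨rnn (m+1), rlt (m+1) (by omega)⟩
  have greedy_eq : ∀ m, greedy β m = c m := by
    intro m
    simp only [greedy]
    rw [Titer m, rrec m]
    have hcast : ((c m : ℝ)) = ((c m : ℤ) : ℝ) := by push_cast; ring
    rw [hcast, Int.floor_intCast_add]
    have h9 : ⌊rr c y n (m+1)⌋ = 0 :=
      Int.floor_eq_zero_iff.mpr ⟨rnn (m+1), rlt (m+1) (by omega)⟩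
    rw [h9, add_zero, Int.toNat_natCast]
  refine ⟨β, ⟨hβ1, hβ2⟩, n - 1, ⟨?_, ?_⟩, ?_⟩
  · rw [greedy_eq, cn1]
  · intro k hk
    rw [greedy_eq]
    exact czero k (by omega)
  · funext k
    have hn' : n - 1 + 1 = n := by omega
    simp only [quasiGreedy, hn']
    have hklt : k % n < n := Nat.mod_lt _ (by omega)
    by_cases hkc : k % n = n - 1
    · rw [if_pos hkc]
      rw [emod k, hkc, en1]
    · rw [if_neg hkc]
      rw [greedy_eq, ceq _ (by omega), ← emod k]
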